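/- If K is nonnegative (λ(S₋)=0), then for the recursive functional Ψ̃_{a,x}, one has lim_{v→−∞} Ψ̃_{a,x}(u,v) = −g(x)·λ(S₊)/(1−ad) for each u, and hence Ĩ_{a,x}(0⃗,0) = g(x)·λ(S₊)/(1−ad), and Ĩ_{a,x}(t₁,0) = +∞ for t₁ ≠ 0⃗. -/

import Mathlib

open MeasureTheory Real Filter ENNReal

/-- For a nonnegative kernel, the recursive functional satisfies
`lim_{v→-∞} Ψ̃_{a,x}(u,v) = -g(x)λ(S₊)/(1-ad)`, hence
`Ĩ_{a,x}(0,0) = g(x)λ(S₊)/(1-ad)` and `Ĩ_{a,x}(t₁,0) = ∞` for `t₁ ≠ 0`. -/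
theorem stmt17 (d q : ℕ) (a : ℝ) (had : 0 < a * d) (had1 : a * d < 1)
    (K : EuclideanSpace ℝ (Fin d) → ℝ)
    (f : EuclideanSpace ℝ (Fin d) → EuclideanSpace ℝ (Fin q) → ℝ)
    (x : EuclideanSpace ℝ (Fin d))
    (hKmeas : Measurable K) (hKbdd : ∃ M : ℝ, ∀ z, |K z| ≤ M)
    (hKint : Integrable K) (hK1 : ∫ z, K z = 1)
    (hKnn : ∀ z, 0 ≤ K z)
    (hSfin : volume {z | 0 < K z} ≠ ⊤)
    (hfmeas : Measurable (f x)) (hfnn : ∀ y, 0 ≤ f x y)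
    (hfprob : ∫ y, f x y = 1)
    (hmom : ∀ (m ρ : ℝ), 0 ≤ m → 0 ≤ ρ →
      Integrable (fun y : EuclideanSpace ℝ (Fin q) =>
        ‖y‖ ^ m * Real.exp (ρ * ‖y‖) * f x y))
    (hint : ∀ (u : EuclideanSpace ℝ (Fin q)) (v : ℝ),
      IntegrableOn (fun s : ℝ => s ^ (-(a * d)) *
        ∫ p : EuclideanSpace ℝ (Fin d) × EuclideanSpace ℝ (Fin q),
          (Real.exp (s ^ (a * d) * ((inner ℝ u p.2 : ℝ) + v) * K p.1) - 1) * f x p.2)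
        (Set.Ioc (0:ℝ) 1))
    (g : ℝ) (hg : g = ∫ y, f x y) (hgpos : 0 < g) :
    (∀ u : EuclideanSpace ℝ (Fin q),
      Tendsto (fun v : ℝ =>
          ∫ s in Set.Ioc (0:ℝ) 1, s ^ (-(a * d)) *
            ∫ p : EuclideanSpace ℝ (Fin d) × EuclideanSpace ℝ (Fin q),
              (Real.exp (s ^ (a * d) * ((inner ℝ u p.2 : ℝ) + v) * K p.1) - 1) * f x p.2)
        atBot (nhds (-(g * (volume {z | 0 < K z}).toReal / (1 - a * d)))))
    ∧ (⨆ w : EuclideanSpace ℝ (Fin q) × ℝ,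
        ENNReal.ofReal ((inner ℝ w.1 (0 : EuclideanSpace ℝ (Fin q)) : ℝ) + w.2 * 0 -
          ∫ s in Set.Ioc (0:ℝ) 1, s ^ (-(a * d)) *
            ∫ p : EuclideanSpace ℝ (Fin d) × EuclideanSpace ℝ (Fin q),
              (Real.exp (s ^ (a * d) * ((inner ℝ w.1 p.2 : ℝ) + w.2) * K p.1) - 1) * f x p.2))
        = ENNReal.ofReal (g * (volume {z | 0 < K z}).toReal / (1 - a * d))
    ∧ ∀ t₁ : EuclideanSpace ℝ (Fin q), t₁ ≠ 0 →
      (⨆ w : EuclideanSpace ℝ (Fin q) × ℝ,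
        ENNReal.ofReal ((inner ℝ w.1 t₁ : ℝ) + w.2 * 0 -
          ∫ s in Set.Ioc (0:ℝ) 1, s ^ (-(a * d)) *
            ∫ p : EuclideanSpace ℝ (Fin d) × EuclideanSpace ℝ (Fin q),
              (Real.exp (s ^ (a * d) * ((inner ℝ w.1 p.2 : ℝ) + w.2) * K p.1) - 1) * f x p.2))
        = ⊤ := by
  classical
  obtain ⟨M₀, hM₀⟩ := hKbdd
  set M : ℝ := max M₀ 0 with hMdef
  have hM0 : 0 ≤ M := le_max_right _ _
  have hKle : ∀ z, K z ≤ M := fun z =>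
    (le_abs_self _).trans ((hM₀ z).trans (le_max_left _ _))
  set Sp : Set (EuclideanSpace ℝ (Fin d)) := {z | 0 < K z} with hSp
  have hSpmeas : MeasurableSet Sp := measurableSet_lt measurable_const hKmeas
  set lam : ℝ := (volume Sp).toReal with hlamdef
  have hlam0 : 0 ≤ lam := ENNReal.toReal_nonneg
  have h1ad : (0:ℝ) < 1 - a * d := by linarith
  have hLnn : 0 ≤ g * lam / (1 - a * d) :=
    div_nonneg (mul_nonneg hgpos.le hlam0) h1ad.le
  -- the inner integrand
  set F : EuclideanSpace ℝ (Fin q) → ℝ → ℝ → (EuclideanSpace ℝ (Fin d) × EuclideanSpace ℝ (Fin q)) → ℝ :=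
    fun u v s pzy => (Real.exp (s ^ (a * d) * ((inner ℝ u pzy.2 : ℝ) + v) * K pzy.1) - 1) * f x pzy.2
    with hFdef
  -- abs bound for exp
  have habs : ∀ x B : ℝ, x ≤ B → 0 ≤ B → |Real.exp x - 1| ≤ Real.exp B := by
    intro x B hxB hB
    have h1 : Real.exp x ≤ Real.exp B := Real.exp_le_exp.2 hxB
    have h2 : (1:ℝ) ≤ Real.exp B := Real.one_le_exp hB
    have h3 : (0:ℝ) < Real.exp x := Real.exp_pos x
    rw [abs_le]; constructor <;> linarith
  -- exponent bound
  have hexple : ∀ (u : EuclideanSpace ℝ (Fin q)) (v s : ℝ), s ∈ Set.Ioc (0:ℝ) 1 →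
      ∀ (z : EuclideanSpace ℝ (Fin d)) (y : EuclideanSpace ℝ (Fin q)),
      s ^ (a * d) * ((inner ℝ u y : ℝ) + v) * K z ≤ M * (‖u‖ * ‖y‖ + max v 0) := by
    intro u v s hs z y
    have hsp0 : 0 ≤ s ^ (a * d) := Real.rpow_nonneg hs.1.le _
    have hsp1 : s ^ (a * d) ≤ 1 := Real.rpow_le_one hs.1.le hs.2 had.le
    have hKz0 : 0 ≤ K z := hKnn z
    have hKzM : K z ≤ M := hKle z
    have hin : (inner ℝ u y : ℝ) ≤ ‖u‖ * ‖y‖ := real_inner_le_norm u y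
    have hc : (inner ℝ u y : ℝ) + v ≤ ‖u‖ * ‖y‖ + max v 0 :=
      add_le_add hin (le_max_left _ _)
    have hD0 : 0 ≤ ‖u‖ * ‖y‖ + max v 0 :=
      add_nonneg (mul_nonneg (norm_nonneg _) (norm_nonneg _)) (le_max_right _ _)
    rcases le_or_gt ((inner ℝ u y : ℝ) + v) 0 with h | h
    · have : s ^ (a * d) * ((inner ℝ u y : ℝ) + v) * K z ≤ 0 := by
        have := mul_nonneg hsp0 hKz0
        nlinarith
      exact this.trans (mul_nonneg hM0 hD0)
    · have h1 : s ^ (a * d) * ((inner ℝ u y : ℝ) + v) ≤ (inner ℝ u y : ℝ) + v := by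
        nlinarith
      nlinarith [mul_le_mul_of_nonneg_right h1 hKz0, mul_le_mul_of_nonneg_left hKzM h.le,
        mul_le_mul_of_nonneg_right hc hM0]
  -- pointwise bound on F
  have hFbd : ∀ (u : EuclideanSpace ℝ (Fin q)) (v s : ℝ), s ∈ Set.Ioc (0:ℝ) 1 →
      ∀ pzy : EuclideanSpace ℝ (Fin d) × EuclideanSpace ℝ (Fin q),
      ‖F u v s pzy‖ ≤ Sp.indicator (fun _ => (1:ℝ)) pzy.1 *
        (Real.exp (M * max v 0) * (Real.exp ((M * ‖u‖) * ‖pzy.2‖) * f x pzy.2)) := by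
    intro u v s hs pzy
    obtain ⟨z, y⟩ := pzy
    rcases (hKnn z).eq_or_lt with hz | hz
    · have hzS : z ∉ Sp := by simp [hSp, ← hz]
      simp [hFdef, ← hz, Set.indicator_of_notMem hzS]
    · have hzS : z ∈ Sp := hz
      rw [Set.indicator_of_mem hzS, hFdef]
      simp only [norm_mul, Real.norm_eq_abs, abs_of_nonneg (hfnn y), one_mul]
      have hb := habs (s ^ (a * d) * ((inner ℝ u y : ℝ) + v) * K z) (M * (‖u‖ * ‖y‖ + max v 0))
        (hexple u v s hs z y)
        (mul_nonneg hM0 (add_nonneg (mul_nonneg (norm_nonneg _) (norm_nonneg _)) (le_max_right _ _)))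
      have heq : Real.exp (M * (‖u‖ * ‖y‖ + max v 0)) =
          Real.exp (M * max v 0) * Real.exp ((M * ‖u‖) * ‖y‖) := by
        rw [← Real.exp_add]; ring_nf
      rw [← mul_assoc, ← heq]
      exact mul_le_mul_of_nonneg_right hb (hfnn y)
  -- integrable dominating functions
  have hGint : ∀ c ρ : ℝ, 0 ≤ ρ →
      Integrable (fun pzy : EuclideanSpace ℝ (Fin d) × EuclideanSpace ℝ (Fin q) =>
        Sp.indicator (fun _ => (1:ℝ)) pzy.1 * (c * (Real.exp (ρ * ‖pzy.2‖) * f x pzy.2))) := by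
    intro c ρ hρ
    rw [MeasureTheory.Measure.volume_eq_prod]
    have h1 : Integrable (Sp.indicator fun _ => (1:ℝ)) volume :=
      (integrable_indicator_iff hSpmeas).2
        (integrableOn_const hSfin)
    have h2 : Integrable (fun y : EuclideanSpace ℝ (Fin q) =>
        c * (Real.exp (ρ * ‖y‖) * f x y)) volume :=
      ((hmom 0 ρ le_rfl hρ).const_mul c).congr (ae_of_all _ fun y => by simp [Real.rpow_zero])
    exact h1.mul_prod h2
  -- measurability of F
  have hFmeas : ∀ (u : EuclideanSpace ℝ (Fin q)) (v s : ℝ),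
      AEStronglyMeasurable (F u v s) volume := by
    intro u v s
    apply Measurable.aestronglyMeasurable
    refine Measurable.mul (Measurable.sub ?_ measurable_const) (hfmeas.comp measurable_snd)
    apply Real.measurable_exp.comp
    refine Measurable.mul (Measurable.mul measurable_const ?_) (hKmeas.comp measurable_fst)
    have : Continuous fun pzy : EuclideanSpace ℝ (Fin d) × EuclideanSpace ℝ (Fin q) =>
        (inner ℝ u pzy.2 : ℝ) + v := by
      exact (continuous_const.inner continuous_snd).add continuous_const
    exact this.measurable
  -- integrability of F
  have hFint : ∀ (u : EuclideanSpace ℝ (Fin q)) (v s : ℝ), s ∈ Set.Ioc (0:ℝ) 1 →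
      Integrable (F u v s) := by
    intro u v s hs
    refine (hGint (Real.exp (M * max v 0)) (M * ‖u‖)
      (mul_nonneg hM0 (norm_nonneg _))).mono (hFmeas u v s) (ae_of_all _ fun pzy => ?_)
    exact (hFbd u v s hs pzy).trans (le_abs_self _)
  -- dominating function for v ≤ 0
  set G : EuclideanSpace ℝ (Fin q) → (EuclideanSpace ℝ (Fin d) × EuclideanSpace ℝ (Fin q)) → ℝ :=
    fun u pzy => Sp.indicator (fun _ => (1:ℝ)) pzy.1 *
      (Real.exp ((M * ‖u‖) * ‖pzy.2‖) * f x pzy.2) with hGdef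
  have hGint' : ∀ u, Integrable (G u) := by
    intro u
    exact (hGint 1 (M * ‖u‖) (mul_nonneg hM0 (norm_nonneg _))).congr
      (ae_of_all _ fun pzy => by simp [hGdef])
  have hGnn : ∀ u pzy, 0 ≤ G u pzy := by
    intro u pzy
    refine mul_nonneg (Set.indicator_nonneg (fun _ _ => zero_le_one) _)
      (mul_nonneg (Real.exp_pos _).le (hfnn _))
  have hFbd0 : ∀ (u : EuclideanSpace ℝ (Fin q)) (v : ℝ), v ≤ 0 → ∀ (s : ℝ), s ∈ Set.Ioc (0:ℝ) 1 →
      ∀ pzy, ‖F u v s pzy‖ ≤ G u pzy := by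
    intro u v hv s hs pzy
    have := hFbd u v s hs pzy
    rwa [max_eq_right hv, mul_zero, Real.exp_zero, one_mul] at this
  -- value of ∫ G₀ where G₀ = indicator * f
  have hG0int : Integrable (fun pzy : EuclideanSpace ℝ (Fin d) × EuclideanSpace ℝ (Fin q) =>
      Sp.indicator (fun _ => (1:ℝ)) pzy.1 * f x pzy.2) := by
    exact (hGint 1 0 le_rfl).congr (ae_of_all _ fun pzy => by simp)
  have hG0val : (∫ pzy : EuclideanSpace ℝ (Fin d) × EuclideanSpace ℝ (Fin q),
      Sp.indicator (fun _ => (1:ℝ)) pzy.1 * f x pzy.2) = lam * g := by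
    rw [MeasureTheory.Measure.volume_eq_prod, integral_prod_mul, integral_indicator_const (1:ℝ) hSpmeas,
      smul_eq_mul, mul_one, hg, hlamdef]
    rfl
  -- inner integral bound
  have hIbd : ∀ (u : EuclideanSpace ℝ (Fin q)) (v : ℝ), v ≤ 0 → ∀ (s : ℝ), s ∈ Set.Ioc (0:ℝ) 1 →
      ‖∫ pzy, F u v s pzy‖ ≤ ∫ pzy, G u pzy := by
    intro u v hv s hs
    exact norm_integral_le_of_norm_le (hGint' u) (ae_of_all _ fun pzy => hFbd0 u v hv s hs pzy)
  -- inner tendsto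
  have hItend : ∀ (u : EuclideanSpace ℝ (Fin q)) (s : ℝ), s ∈ Set.Ioc (0:ℝ) 1 →
      Tendsto (fun v => ∫ pzy, F u v s pzy) atBot (nhds (-(lam * g))) := by
    intro u s hs
    have hval : -(lam * g) = ∫ pzy : EuclideanSpace ℝ (Fin d) × EuclideanSpace ℝ (Fin q),
        -(Sp.indicator (fun _ => (1:ℝ)) pzy.1 * f x pzy.2) := by
      rw [integral_neg, hG0val]
    rw [hval]
    refine tendsto_integral_filter_of_dominated_convergence (G u)
      (Eventually.of_forall fun v => hFmeas u v s)
      ?_ (hGint' u) (ae_of_all _ fun pzy => ?_)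
    · filter_upwards [eventually_le_atBot (0:ℝ)] with v hv
      exact ae_of_all _ fun pzy => hFbd0 u v hv s hs pzy
    · obtain ⟨z, y⟩ := pzy
      rcases (hKnn z).eq_or_lt with hz | hz
      · have hzS : z ∉ Sp := by simp [hSp, ← hz]
        simp only [hFdef, ← hz, mul_zero, Real.exp_zero, sub_self, zero_mul,
          Set.indicator_of_notMem hzS, neg_zero]
        exact tendsto_const_nhds
      · have hzS : z ∈ Sp := hz
        have hpos : 0 < s ^ (a * d) * K z :=
          mul_pos (Real.rpow_pos_of_pos hs.1 _) hz
        have h1 : Tendsto (fun v : ℝ => s ^ (a * d) * ((inner ℝ u y : ℝ) + v) * K z)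
            atBot atBot := by
          have heq : (fun v : ℝ => s ^ (a * d) * ((inner ℝ u y : ℝ) + v) * K z) =
              fun v : ℝ => ((inner ℝ u y : ℝ) + v) * (s ^ (a * d) * K z) := by
            funext v; ring
          rw [heq]
          exact (tendsto_atBot_add_const_left _ _ tendsto_id).atBot_mul_const hpos
        have h2 : Tendsto (fun v : ℝ =>
            Real.exp (s ^ (a * d) * ((inner ℝ u y : ℝ) + v) * K z)) atBot (nhds 0) :=
          Real.tendsto_exp_atBot.comp h1
        have h3 : Tendsto (fun v : ℝ =>
            (Real.exp (s ^ (a * d) * ((inner ℝ u y : ℝ) + v) * K z) - 1) * f x y)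
            atBot (nhds ((0 - 1) * f x y)) :=
          (h2.sub tendsto_const_nhds).mul_const (f x y)
        simp only [hFdef]
        convert h3 using 2
        rw [Set.indicator_of_mem hzS]
        ring
    done
  -- outer dominating bound
  set C0 : EuclideanSpace ℝ (Fin q) → ℝ := fun u => ∫ pzy, G u pzy with hC0def
  have hC0nn : ∀ u, 0 ≤ C0 u := fun u => integral_nonneg (hGnn u)
  have hrpowInt : IntegrableOn (fun s : ℝ => s ^ (-(a * d))) (Set.Ioc 0 1) volume :=
    (intervalIntegral.intervalIntegrable_rpow' (by linarith)).1
  -- value of the outer integral of the limit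
  have hval : (∫ s in Set.Ioc (0:ℝ) 1, s ^ (-(a * d)) * (-(lam * g)))
      = -(g * lam / (1 - a * d)) := by
    rw [← intervalIntegral.integral_of_le zero_le_one,
      intervalIntegral.integral_mul_const, integral_rpow (Or.inl (by linarith))]
    rw [Real.one_rpow, Real.zero_rpow (by linarith : -(a * d) + 1 ≠ 0)]
    rw [show -(a * (d:ℝ)) + 1 = 1 - a * d by ring]
    field_simp
    ring
  -- the main tendsto statement
  have htend : ∀ u : EuclideanSpace ℝ (Fin q),
      Tendsto (fun v : ℝ => ∫ s in Set.Ioc (0:ℝ) 1, s ^ (-(a * d)) * ∫ pzy, F u v s pzy)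
        atBot (nhds (-(g * lam / (1 - a * d)))) := by
    intro u
    rw [← hval]
    refine tendsto_integral_filter_of_dominated_convergence
      (fun s => C0 u * s ^ (-(a * d)))
      (Eventually.of_forall fun v => (hint u v).aestronglyMeasurable)
      ?_ (hrpowInt.const_mul (C0 u)) ?_
    · filter_upwards [eventually_le_atBot (0:ℝ)] with v hv
      rw [ae_restrict_iff' measurableSet_Ioc]
      refine ae_of_all _ fun s hs => ?_
      have hsnn : 0 ≤ s ^ (-(a * d)) := Real.rpow_nonneg hs.1.le _
      rw [norm_mul, Real.norm_eq_abs, abs_of_nonneg hsnn, mul_comm (C0 u)]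
      exact mul_le_mul_of_nonneg_left (hIbd u v hv s hs) hsnn
    · rw [ae_restrict_iff' measurableSet_Ioc]
      exact ae_of_all _ fun s hs => (hItend u s hs).const_mul _
  -- lower bound for Psi
  have hInnerLow : ∀ (u : EuclideanSpace ℝ (Fin q)) (v s : ℝ), s ∈ Set.Ioc (0:ℝ) 1 →
      -(lam * g) ≤ ∫ pzy, F u v s pzy := by
    intro u v s hs
    have hle : (fun pzy : EuclideanSpace ℝ (Fin d) × EuclideanSpace ℝ (Fin q) =>
        -(Sp.indicator (fun _ => (1:ℝ)) pzy.1 * f x pzy.2)) ≤ F u v s := by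
      intro pzy
      obtain ⟨z, y⟩ := pzy
      rcases (hKnn z).eq_or_lt with hz | hz
      · have hzS : z ∉ Sp := by simp [hSp, ← hz]
        simp [hFdef, ← hz, Set.indicator_of_notMem hzS]
      · have hzS : z ∈ Sp := hz
        simp only [hFdef, Set.indicator_of_mem hzS, one_mul]
        have := Real.exp_pos (s ^ (a * d) * ((inner ℝ u y : ℝ) + v) * K z)
        nlinarith [hfnn y]
    have := integral_mono hG0int.neg (hFint u v s hs) hle
    simp only [Pi.neg_apply] at this
    rwa [integral_neg, hG0val] at this
  have hPsiLow : ∀ (u : EuclideanSpace ℝ (Fin q)) (v : ℝ),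
      -(g * lam / (1 - a * d)) ≤ ∫ s in Set.Ioc (0:ℝ) 1, s ^ (-(a * d)) * ∫ pzy, F u v s pzy := by
    intro u v
    rw [← hval]
    refine setIntegral_mono_on (hrpowInt.mul_const _) (hint u v) measurableSet_Ioc
      fun s hs => ?_
    exact mul_le_mul_of_nonneg_left (hInnerLow u v s hs) (Real.rpow_nonneg hs.1.le _)
  refine ⟨htend, ?_, ?_⟩
  · -- value at (0,0)
    apply le_antisymm
    · refine iSup_le fun w => ?_
      refine ENNReal.ofReal_le_ofReal ?_
      have h1 := hPsiLow w.1 w.2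
      simp only [inner_zero_right, mul_zero, zero_add]
      linarith
    · have h0 : Tendsto (fun v : ℝ => ENNReal.ofReal
          ((inner ℝ (0 : EuclideanSpace ℝ (Fin q)) (0 : EuclideanSpace ℝ (Fin q)) : ℝ) + v * 0 -
            ∫ s in Set.Ioc (0:ℝ) 1, s ^ (-(a * d)) * ∫ pzy, F 0 v s pzy))
          atBot (nhds (ENNReal.ofReal (g * lam / (1 - a * d)))) := by
        refine (ENNReal.continuous_ofReal.tendsto _).comp ?_
        have h1 : Tendsto (fun v : ℝ =>
            -(∫ s in Set.Ioc (0:ℝ) 1, s ^ (-(a * d)) * ∫ pzy, F 0 v s pzy))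
            atBot (nhds (-(-(g * lam / (1 - a * d))))) := (htend 0).neg
        rw [neg_neg] at h1
        refine h1.congr fun v => ?_
        simp [inner_zero_right]
      refine le_of_tendsto' h0 fun v => ?_
      exact le_iSup (fun w : EuclideanSpace ℝ (Fin q) × ℝ =>
        ENNReal.ofReal ((inner ℝ w.1 (0 : EuclideanSpace ℝ (Fin q)) : ℝ) + w.2 * 0 -
          ∫ s in Set.Ioc (0:ℝ) 1, s ^ (-(a * d)) * ∫ pzy, F w.1 w.2 s pzy))
        ((0 : EuclideanSpace ℝ (Fin q)), v)
  · -- value at (t₁, 0)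
    intro t₁ ht₁
    rw [iSup_eq_top]
    intro b hb
    have hnt : (0:ℝ) < ‖t₁‖ ^ 2 := by
      have := norm_pos_iff.mpr ht₁
      positivity
    set c : ℝ := (b.toReal + 2) / ‖t₁‖ ^ 2 with hcdef
    have hc : c * ‖t₁‖ ^ 2 = b.toReal + 2 := by
      rw [hcdef]; exact div_mul_cancel₀ _ hnt.ne'
    have hev : ∀ᶠ v in (atBot : Filter ℝ),
        (∫ s in Set.Ioc (0:ℝ) 1, s ^ (-(a * d)) * ∫ pzy, F (c • t₁) v s pzy)
          < -(g * lam / (1 - a * d)) + 1 :=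
      Filter.Tendsto.eventually_lt_const (by linarith) (htend (c • t₁))
    obtain ⟨v, hv⟩ := hev.exists
    refine ⟨((c • t₁), v), ?_⟩
    have hinner : (inner ℝ (c • t₁) t₁ : ℝ) = c * ‖t₁‖ ^ 2 := by
      rw [real_inner_smul_left, real_inner_self_eq_norm_sq]
    rw [ENNReal.lt_ofReal_iff_toReal_lt hb.ne, hinner, hc, mul_zero, add_zero]
    have hbt : 0 ≤ b.toReal := ENNReal.toReal_nonneg
    linarith
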